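/- Let K^[j]_i(θ) be linear maps on ℂ^D, differentiable in θ, and ψ ∈ ℂ^D a unit vector such that K^[j]_i(θ0) ψ = c^[j]_i ψ with c^[j]_i ∈ ℂ \ {0} for all i, j. Then for any outcome string (i_1,…,i_n), (d/dθ) ‖K^[n]_{i_n}(θ)···K^[1]_{i_1}(θ) ψ‖² |_{θ0} = |c^[1]_{i_1}···c^[n]_{i_n}|² · 2 Re Σ_{j=1}^n ⟨ψ| K^[n]_{i_n}···K^[j+1]_{i_{j+1}} K̇^[j]_{i_j} |ψ⟩ / (c^[j]_{i_j} c^[j+1]_{i_{j+1}} ··· c^[n]_{i_n}), where K^[j]_i = K^[j]_i(θ0) and K̇^[j]_i = (d/dθ)K^[j]_i(θ)|_{θ0}. -/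

import Mathlib

open scoped BigOperators Matrix ComplexConjugate Classical
open Matrix

noncomputable section

set_option maxRecDepth 8000

/-- Inner product on `ι → ℂ`, conjugate-linear in the first argument. -/
def inn {ι : Type*} [Fintype ι] (v w : ι → ℂ) : ℂ := ∑ i, conj (v i) * w i

/-- Squared norm on `ι → ℂ`. -/
def nsq {ι : Type*} [Fintype ι] (v : ι → ℂ) : ℝ := ∑ i, Complex.normSq (v i)

/-- `A (n-1) ⋯ A 1 A 0`. -/
def kprodFin {α : Type*} [Fintype α] [DecidableEq α] {n : ℕ} (A : Fin n → Matrix α α ℂ) :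
    Matrix α α ℂ :=
  ((List.ofFn A).reverse).prod

/-- `A (n-1) ⋯ A j`. -/
def kprodFrom {α : Type*} [Fintype α] [DecidableEq α] {n : ℕ} (A : Fin n → Matrix α α ℂ)
    (j : ℕ) : Matrix α α ℂ :=
  (((List.ofFn A).drop j).reverse).prod

/-- `A (j-1) ⋯ A 0`. -/
def kprodTo {α : Type*} [Fintype α] [DecidableEq α] {n : ℕ} (A : Fin n → Matrix α α ℂ)
    (j : ℕ) : Matrix α α ℂ :=
  (((List.ofFn A).take j).reverse).prod

section Aux

variable {α : Type*} [Fintype α] [DecidableEq α]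

lemma kprodFin_zero (A : Fin 0 → Matrix α α ℂ) : kprodFin A = 1 := by
  simp [kprodFin]

lemma kprodFin_succ {n : ℕ} (A : Fin (n + 1) → Matrix α α ℂ) :
    kprodFin A = kprodFin (A ∘ Fin.succ) * A 0 := by
  simp [kprodFin, List.ofFn_succ, Function.comp_def]

lemma kprodFrom_succ {n : ℕ} (A : Fin (n + 1) → Matrix α α ℂ) (j : ℕ) :
    kprodFrom A (j + 1) = kprodFrom (A ∘ Fin.succ) j := by
  simp [kprodFrom, List.ofFn_succ, Function.comp_def]

lemma kprodFrom_zero {n : ℕ} (A : Fin n → Matrix α α ℂ) : kprodFrom A 0 = kprodFin A := by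
  simp [kprodFrom, kprodFin]

lemma kprodTo_zero {n : ℕ} (A : Fin n → Matrix α α ℂ) : kprodTo A 0 = 1 := by
  simp [kprodTo]

lemma kprodTo_succ {n : ℕ} (A : Fin (n + 1) → Matrix α α ℂ) (j : ℕ) :
    kprodTo A (j + 1) = kprodTo (A ∘ Fin.succ) j * A 0 := by
  simp [kprodTo, List.ofFn_succ, Function.comp_def]

/-- entrywise derivative of the ordered product. -/
lemma hasDerivAt_kprodFin (θ0 : ℝ) :
    ∀ (n : ℕ) (A : Fin n → ℝ → Matrix α α ℂ) (A' : Fin n → Matrix α α ℂ),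
    (∀ j s t, HasDerivAt (fun θ => A j θ s t) (A' j s t) θ0) →
    ∀ s t, HasDerivAt (fun θ => kprodFin (fun j => A j θ) s t)
      ((∑ j : Fin n, kprodFrom (fun l => A l θ0) ((j : ℕ) + 1) * A' j *
        kprodTo (fun l => A l θ0) (j : ℕ)) s t) θ0 := by
  intro n
  induction n with
  | zero =>
      intro A A' hA s t
      have : (fun θ => kprodFin (fun j : Fin 0 => A j θ) s t) =
          fun _ => (1 : Matrix α α ℂ) s t := by
        funext θ; rw [kprodFin_zero]
      rw [this]
      simpa using hasDerivAt_const θ0 ((1 : Matrix α α ℂ) s t)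
  | succ n ih =>
      intro A A' hA s t
      have hfun : (fun θ => kprodFin (fun j : Fin (n + 1) => A j θ) s t) =
          fun θ => ∑ u, kprodFin (fun j : Fin n => A j.succ θ) s u * A 0 θ u t := by
        funext θ
        rw [kprodFin_succ, Matrix.mul_apply]
        rfl
      rw [hfun]
      set P := kprodFin (fun j : Fin n => A j.succ θ0) with hP
      set Pd := ∑ j : Fin n, kprodFrom (fun l : Fin n => A l.succ θ0) ((j : ℕ) + 1) *
          A' j.succ * kprodTo (fun l : Fin n => A l.succ θ0) (j : ℕ) with hPd
      have hder : HasDerivAt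
          (fun θ => ∑ u, kprodFin (fun j : Fin n => A j.succ θ) s u * A 0 θ u t)
          (∑ u, (Pd s u * A 0 θ0 u t + P s u * A' 0 u t)) θ0 := by
        apply HasDerivAt.fun_sum
        intro u _
        exact (ih (fun j => A j.succ) (fun j => A' j.succ)
          (fun j => hA j.succ) s u).mul (hA 0 u t)
      have hmat : (∑ j : Fin (n + 1), kprodFrom (fun l => A l θ0) ((j : ℕ) + 1) * A' j *
            kprodTo (fun l => A l θ0) (j : ℕ)) = Pd * A 0 θ0 + P * A' 0 := by
        rw [Fin.sum_univ_succ, add_comm]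
        congr 1
        · rw [hPd, Finset.sum_mul]
          refine Finset.sum_congr rfl fun j _ => ?_
          have h1 : kprodFrom (fun l : Fin (n+1) => A l θ0) ((j.succ : ℕ) + 1) =
              kprodFrom (fun l : Fin n => A l.succ θ0) ((j : ℕ) + 1) := by
            rw [show ((j.succ : ℕ) + 1) = ((j : ℕ) + 1) + 1 from rfl, kprodFrom_succ]
            rfl
          have h2 : kprodTo (fun l : Fin (n+1) => A l θ0) (j.succ : ℕ) =
              kprodTo (fun l : Fin n => A l.succ θ0) (j : ℕ) * A 0 θ0 := by
            rw [show ((j.succ : ℕ)) = (j : ℕ) + 1 from rfl, kprodTo_succ]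
            rfl
          rw [h1, h2, ← mul_assoc]
        · show kprodFrom (fun l => A l θ0) (0 + 1) * A' 0 * kprodTo (fun l => A l θ0) 0 =
            P * A' 0
          rw [kprodTo_zero, mul_one, kprodFrom_succ, kprodFrom_zero, hP]
          rfl
      have hval : (∑ u, (Pd s u * A 0 θ0 u t + P s u * A' 0 u t)) =
          ((∑ j : Fin (n + 1), kprodFrom (fun l => A l θ0) ((j : ℕ) + 1) * A' j *
            kprodTo (fun l => A l θ0) (j : ℕ)) s t) := by
        rw [hmat, Matrix.add_apply, Matrix.mul_apply, Matrix.mul_apply,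
          ← Finset.sum_add_distrib]
      rw [← hval]
      exact hder

/-- joint eigenvector of the ordered product. -/
lemma eigen_kprodFin (ψ : α → ℂ) :
    ∀ (n : ℕ) (A : Fin n → Matrix α α ℂ) (c : Fin n → ℂ),
    (∀ j, (A j).mulVec ψ = c j • ψ) → (kprodFin A).mulVec ψ = (∏ j, c j) • ψ := by
  intro n
  induction n with
  | zero => intro A c h; simp [kprodFin_zero]
  | succ n ih =>
      intro A c h
      rw [kprodFin_succ, ← Matrix.mulVec_mulVec, h 0, Matrix.mulVec_smul,
        ih (A ∘ Fin.succ) (c ∘ Fin.succ) (fun j => h j.succ), Fin.prod_univ_succ,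
        smul_smul]
      simp [Function.comp_def]

lemma eigen_kprodTo (ψ : α → ℂ) :
    ∀ (n : ℕ) (A : Fin n → Matrix α α ℂ) (c : Fin n → ℂ),
    (∀ j, (A j).mulVec ψ = c j • ψ) → ∀ m : ℕ,
    (kprodTo A m).mulVec ψ = (∏ l : Fin n, if (l : ℕ) < m then c l else 1) • ψ := by
  intro n
  induction n with
  | zero => intro A c h m; simp [kprodTo]
  | succ n ih =>
      intro A c h m
      cases m with
      | zero => simp [kprodTo_zero]
      | succ m =>
          rw [kprodTo_succ, ← Matrix.mulVec_mulVec, h 0, Matrix.mulVec_smul,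
            ih (A ∘ Fin.succ) (c ∘ Fin.succ) (fun j => h j.succ) m,
            smul_smul]
          congr 1
          rw [Fin.prod_univ_succ]
          simp [Function.comp, Nat.succ_lt_succ_iff, mul_comm]

lemma inn_smul_left {ι : Type*} [Fintype ι] (a : ℂ) (v w : ι → ℂ) :
    inn (a • v) w = conj a * inn v w := by
  simp [inn, Finset.mul_sum, mul_assoc]

lemma inn_sum_right {ι β : Type*} [Fintype ι] (v : ι → ℂ) (s : Finset β) (w : β → ι → ℂ) :
    inn v (∑ b ∈ s, w b) = ∑ b ∈ s, inn v (w b) := by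
  simp [inn, Finset.mul_sum]
  rw [Finset.sum_comm]

lemma inn_smul_right {ι : Type*} [Fintype ι] (a : ℂ) (v w : ι → ℂ) :
    inn v (a • w) = a * inn v w := by
  simp only [inn, Pi.smul_apply, smul_eq_mul, Finset.mul_sum]
  exact Finset.sum_congr rfl fun i _ => by ring

/-- derivative of the squared norm. -/
lemma hasDerivAt_nsq {ι : Type*} [Fintype ι] (θ0 : ℝ) (v : ℝ → ι → ℂ) (w : ι → ℂ)
    (hv : ∀ s, HasDerivAt (fun θ => v θ s) (w s) θ0) :
    HasDerivAt (fun θ => nsq (v θ)) (2 * (inn (v θ0) w).re) θ0 := by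
  have h : ∀ s : ι, HasDerivAt (fun θ => Complex.normSq (v θ s))
      (2 * ((conj (v θ0 s)) * w s).re) θ0 := by
    intro s
    have hre : HasDerivAt (fun θ => (v θ s).re) (w s).re θ0 :=
      Complex.reCLM.hasFDerivAt.comp_hasDerivAt θ0 (hv s)
    have him : HasDerivAt (fun θ => (v θ s).im) (w s).im θ0 :=
      Complex.imCLM.hasFDerivAt.comp_hasDerivAt θ0 (hv s)
    have : HasDerivAt (fun θ => (v θ s).re * (v θ s).re + (v θ s).im * (v θ s).im)
        ((w s).re * (v θ0 s).re + (v θ0 s).re * (w s).re +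
          ((w s).im * (v θ0 s).im + (v θ0 s).im * (w s).im)) θ0 :=
      (hre.mul hre).add (him.mul him)
    have heq : (2 : ℝ) * ((conj (v θ0 s)) * w s).re =
        (w s).re * (v θ0 s).re + (v θ0 s).re * (w s).re +
          ((w s).im * (v θ0 s).im + (v θ0 s).im * (w s).im) := by
      simp [Complex.mul_re]
      ring
    rw [heq]
    simpa [Complex.normSq_apply] using this
  have := HasDerivAt.fun_sum (fun s (_ : s ∈ (Finset.univ : Finset ι)) => h s)
  have heq2 : ∑ s : ι, 2 * ((conj (v θ0 s)) * w s).re = 2 * (inn (v θ0) w).re := by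
    rw [inn, Complex.re_sum, Finset.mul_sum]
  rw [heq2] at this
  simpa [nsq] using this

end Aux

/-- derivative of the output likelihood under stationarity. If
`K^[j]_i(θ0) ψ = c^[j]_i ψ` with `c^[j]_i ≠ 0`, then for any outcome string,
`(d/dθ)‖K^[n]_{iₙ}(θ)⋯K^[1]_{i₁}(θ)ψ‖²|_{θ0}
  = |c_{i₁}⋯c_{iₙ}|² · 2Re ∑ⱼ ⟨ψ|K_{iₙ}⋯K_{i_{j+1}} K̇_{i_j}|ψ⟩/(c_{i_j}⋯c_{iₙ})`. -/
theorem likelihood_derivative_formula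
    (D n : ℕ) {ι : Type*} [Fintype ι] (θ0 : ℝ)
    (K : ℕ → ι → ℝ → Matrix (Fin D) (Fin D) ℂ)
    (Kd : ℕ → ι → Matrix (Fin D) (Fin D) ℂ)
    (hKd : ∀ j i s t, HasDerivAt (fun θ => K j i θ s t) (Kd j i s t) θ0)
    (ψ : Fin D → ℂ) (hψ : nsq ψ = 1)
    (c : ℕ → ι → ℂ) (hc0 : ∀ j i, c j i ≠ 0)
    (hKψ : ∀ j i, (K j i θ0).mulVec ψ = c j i • ψ)
    (g : Fin n → ι) :
    HasDerivAt
      (fun θ => nsq ((kprodFin fun j : Fin n => K (j : ℕ) (g j) θ).mulVec ψ))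
      ((∏ j : Fin n, Complex.normSq (c (j : ℕ) (g j))) *
        (2 * (∑ j : Fin n,
          inn ψ (((kprodFrom (fun l : Fin n => K (l : ℕ) (g l) θ0) ((j : ℕ) + 1)
                    * Kd (j : ℕ) (g j)).mulVec ψ))
            / ∏ l ∈ Finset.Ici j, c (l : ℕ) (g l)).re))
      θ0 := by
  classical
  set A : Fin n → ℝ → Matrix (Fin D) (Fin D) ℂ := fun j θ => K (j : ℕ) (g j) θ with hA
  set A' : Fin n → Matrix (Fin D) (Fin D) ℂ := fun j => Kd (j : ℕ) (g j) with hA'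
  set cc : Fin n → ℂ := fun j => c (j : ℕ) (g j) with hcc
  have hAd : ∀ j s t, HasDerivAt (fun θ => A j θ s t) (A' j s t) θ0 :=
    fun j s t => hKd (j : ℕ) (g j) s t
  have hAeig : ∀ j, (A j θ0).mulVec ψ = cc j • ψ := fun j => hKψ (j : ℕ) (g j)
  -- the derivative matrix
  set Mdot : Matrix (Fin D) (Fin D) ℂ :=
    ∑ j : Fin n, kprodFrom (fun l => A l θ0) ((j : ℕ) + 1) * A' j *
      kprodTo (fun l => A l θ0) (j : ℕ) with hMdot
  -- entrywise derivative of the output vector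
  have hvec : ∀ s, HasDerivAt (fun θ => ((kprodFin fun j : Fin n => A j θ).mulVec ψ) s)
      ((Mdot.mulVec ψ) s) θ0 := by
    intro s
    have : HasDerivAt (fun θ => ∑ t, kprodFin (fun j : Fin n => A j θ) s t * ψ t)
        (∑ t, Mdot s t * ψ t) θ0 := by
      apply HasDerivAt.fun_sum
      intro t _
      exact (hasDerivAt_kprodFin θ0 n A A' hAd s t).mul_const (ψ t)
    simpa [Matrix.mulVec, dotProduct] using this
  have hmain := hasDerivAt_nsq θ0 (fun θ => (kprodFin fun j : Fin n => A j θ).mulVec ψ)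
    (Mdot.mulVec ψ) hvec
  -- compute value at θ0
  have hv0 : (kprodFin fun j : Fin n => A j θ0).mulVec ψ = (∏ j, cc j) • ψ :=
    eigen_kprodFin ψ n (fun j => A j θ0) cc hAeig
  -- Mdot.mulVec ψ
  have hMψ : Mdot.mulVec ψ = ∑ j : Fin n,
      ((∏ l ∈ Finset.Iio j, cc l) •
        ((kprodFrom (fun l => A l θ0) ((j : ℕ) + 1) * A' j).mulVec ψ)) := by
    have hterm : ∀ j : Fin n,
        (kprodFrom (fun l => A l θ0) ((j : ℕ) + 1) * A' j *
          kprodTo (fun l => A l θ0) (j : ℕ)).mulVec ψ =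
        (∏ l ∈ Finset.Iio j, cc l) •
          ((kprodFrom (fun l => A l θ0) ((j : ℕ) + 1) * A' j).mulVec ψ) := by
      intro j
      rw [← Matrix.mulVec_mulVec,
        eigen_kprodTo ψ n (fun l => A l θ0) cc hAeig (j : ℕ), Matrix.mulVec_smul]
      have hset : Finset.Iio j = Finset.filter (fun l : Fin n => (l : ℕ) < (j : ℕ))
          Finset.univ := by
        ext l
        simp only [Finset.mem_Iio, Finset.mem_filter, Finset.mem_univ, true_and, Fin.lt_def]
      have hIio : (∏ l : Fin n, if ((l : ℕ) < (j : ℕ)) then cc l else 1) =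
          ∏ l ∈ Finset.Iio j, cc l := by
        rw [hset, Finset.prod_filter]
      rw [← hIio]
    rw [hMdot]
    have : (∑ j : Fin n, kprodFrom (fun l => A l θ0) ((j : ℕ) + 1) * A' j *
        kprodTo (fun l => A l θ0) (j : ℕ)).mulVec ψ =
        ∑ j : Fin n, (kprodFrom (fun l => A l θ0) ((j : ℕ) + 1) * A' j *
          kprodTo (fun l => A l θ0) (j : ℕ)).mulVec ψ := by
      ext s
      simp [Matrix.mulVec, dotProduct, Matrix.sum_apply, Finset.sum_mul]
      rw [Finset.sum_comm]
    rw [this]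
    exact Finset.sum_congr rfl (fun j _ => hterm j)
  -- now compute the inner product
  have hkey : 2 * (inn ((kprodFin fun j : Fin n => A j θ0).mulVec ψ) (Mdot.mulVec ψ)).re =
      (∏ j : Fin n, Complex.normSq (cc j)) *
        (2 * (∑ j : Fin n,
          inn ψ (((kprodFrom (fun l : Fin n => A l θ0) ((j : ℕ) + 1) * A' j).mulVec ψ))
            / ∏ l ∈ Finset.Ici j, cc l).re) := by
    rw [hv0, hMψ, inn_smul_left, inn_sum_right]
    simp only [inn_smul_right]
    have hterm : ∀ j : Fin n,
        conj (∏ l, cc l) * ((∏ l ∈ Finset.Iio j, cc l) *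
          inn ψ (((kprodFrom (fun l => A l θ0) ((j : ℕ) + 1) * A' j).mulVec ψ))) =
        (↑(∏ l : Fin n, Complex.normSq (cc l)) : ℂ) *
          (inn ψ (((kprodFrom (fun l => A l θ0) ((j : ℕ) + 1) * A' j).mulVec ψ))
            / ∏ l ∈ Finset.Ici j, cc l) := by
      intro j
      have hunion : (Finset.Iio j) ∪ (Finset.Ici j) = Finset.univ := by
        ext l
        simp [lt_or_ge l j]
      have hdisj : Disjoint (Finset.Iio j) (Finset.Ici j) := by
        rw [Finset.disjoint_left]
        intro l hl hl'
        simp at hl hl'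
        exact absurd hl' (not_le.mpr hl)
      have hsplit : (∏ l, cc l) = (∏ l ∈ Finset.Iio j, cc l) * (∏ l ∈ Finset.Ici j, cc l) := by
        rw [← Finset.prod_union hdisj, hunion]
      have hQ : (∏ l ∈ Finset.Ici j, cc l) ≠ 0 :=
        Finset.prod_ne_zero_iff.mpr (fun l _ => hc0 (l : ℕ) (g l))
      have hN : (↑(∏ l : Fin n, Complex.normSq (cc l)) : ℂ) =
          conj (∏ l, cc l) * (∏ l, cc l) := by
        push_cast
        rw [map_prod, ← Finset.prod_mul_distrib]
        exact Finset.prod_congr rfl (fun l _ => (Complex.normSq_eq_conj_mul_self).symm ▸ rfl)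
      rw [hN, hsplit]
      field_simp
    rw [Finset.mul_sum,
      Finset.sum_congr rfl (fun j (_ : j ∈ Finset.univ) => hterm j), ← Finset.mul_sum,
      Complex.re_ofReal_mul]
    ring
  rw [hkey] at hmain
  exact hmain
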